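/- Let a, b, c ∈ ℝ³ be affinely independent, let P be the closed triangle (the convex hull of {a, b, c}), and let p = α·a + β·b + γ·c with α, β, γ > 0 and α + β + γ = 1 be a point in the interior of the triangle. For every y ∈ ℝ³, p is a nearest point of y in P if and only if ⟨y − p, b − a⟩ = 0 and ⟨y − p, c − a⟩ = 0, i.e., y − p is orthogonal to the plane of the triangle. -/
import Mathlib


open scoped RealInnerProductSpace

/-- For a point `p = αa + βb + γc` (with `α, β, γ > 0`, `α + β + γ = 1`) in the interior
of the closed triangle `P = conv{a,b,c} ⊆ ℝ³` with `a, b, c` affinely independent: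
`p` is a nearest point of `y` in `P` iff `y − p` is orthogonal to the plane of the
triangle, i.e. `⟪y − p, b − a⟫ = 0` and `⟪y − p, c − a⟫ = 0`. -/
theorem triangle_interior_nearest_point_iff_orthogonal
    (a b c : EuclideanSpace ℝ (Fin 3)) (hind : AffineIndependent ℝ ![a, b, c])
    (α β γ : ℝ) (hα : 0 < α) (hβ : 0 < β) (hγ : 0 < γ) (hsum : α + β + γ = 1)
    (p : EuclideanSpace ℝ (Fin 3)) (hp : p = α • a + β • b + γ • c) :
    ∀ y : EuclideanSpace ℝ (Fin 3),
      (‖y - p‖ = Metric.infDist y (convexHull ℝ {a, b, c}) ↔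
        (⟪y - p, b - a⟫ = 0 ∧ ⟪y - p, c - a⟫ = 0)) := by
  intro y
  set K : Set (EuclideanSpace ℝ (Fin 3)) := convexHull ℝ {a, b, c} with hK
  have hconv : Convex ℝ K := convex_convexHull ℝ _
  have ha : a ∈ K := subset_convexHull ℝ _ (by simp)
  have hb : b ∈ K := subset_convexHull ℝ _ (by simp)
  have hc : c ∈ K := subset_convexHull ℝ _ (by simp)
  have hβγ : (0:ℝ) < β + γ := by linarith
  have hpmem : p ∈ K := by
    have hq : (β / (β + γ)) • b + (γ / (β + γ)) • c ∈ K :=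
      hconv hb hc (by positivity) (by positivity) (by field_simp)
    have hmem := hconv ha hq hα.le hβγ.le (by linarith)
    have heq : α • a + (β + γ) • ((β / (β + γ)) • b + (γ / (β + γ)) • c)
        = α • a + β • b + γ • c := by
      rw [smul_add, smul_smul, smul_smul, mul_div_cancel₀ _ hβγ.ne',
        mul_div_cancel₀ _ hβγ.ne', add_assoc]
    rw [hp, ← heq]
    exact hmem
  have hiInf : Metric.infDist y K = ⨅ w : K, ‖y - w‖ := by
    rw [Metric.infDist_eq_iInf]
    simp [dist_eq_norm]
  rw [hiInf, norm_eq_iInf_iff_real_inner_le_zero hconv hpmem]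
  have h0 : α • (a - p) + β • (b - p) + γ • (c - p) = 0 := by
    have hα' : α = 1 - β - γ := by linarith
    rw [hp, hα']
    module
  constructor
  · intro H
    have hia := H a ha
    have hib := H b hb
    have hic := H c hc
    have hs : α * ⟪y - p, a - p⟫ + β * ⟪y - p, b - p⟫ + γ * ⟪y - p, c - p⟫ = 0 := by
      have h1 : ⟪y - p, α • (a - p) + β • (b - p) + γ • (c - p)⟫ = 0 := by
        rw [h0, inner_zero_right]
      rwa [inner_add_right, inner_add_right, real_inner_smul_right,
        real_inner_smul_right, real_inner_smul_right] at h1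
    have ta : α * ⟪y - p, a - p⟫ ≤ 0 := mul_nonpos_of_nonneg_of_nonpos hα.le hia
    have tb : β * ⟪y - p, b - p⟫ ≤ 0 := mul_nonpos_of_nonneg_of_nonpos hβ.le hib
    have tc : γ * ⟪y - p, c - p⟫ ≤ 0 := mul_nonpos_of_nonneg_of_nonpos hγ.le hic
    have ea : ⟪y - p, a - p⟫ = 0 := by
      have : α * ⟪y - p, a - p⟫ = 0 := by linarith
      rcases mul_eq_zero.1 this with h | h
      · exact absurd h hα.ne'
      · exact h
    have eb : ⟪y - p, b - p⟫ = 0 := by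
      have : β * ⟪y - p, b - p⟫ = 0 := by linarith
      rcases mul_eq_zero.1 this with h | h
      · exact absurd h hβ.ne'
      · exact h
    have ec : ⟪y - p, c - p⟫ = 0 := by
      have : γ * ⟪y - p, c - p⟫ = 0 := by linarith
      rcases mul_eq_zero.1 this with h | h
      · exact absurd h hγ.ne'
      · exact h
    constructor
    · have h2 : ⟪y - p, b - a⟫ = ⟪y - p, b - p⟫ - ⟪y - p, a - p⟫ := by
        rw [← inner_sub_right]; congr 1; abel
      rw [h2, ea, eb]; ring
    · have h2 : ⟪y - p, c - a⟫ = ⟪y - p, c - p⟫ - ⟪y - p, a - p⟫ := by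
        rw [← inner_sub_right]; congr 1; abel
      rw [h2, ea, ec]; ring
  · rintro ⟨h1, h2⟩ w hw
    have hS : K ⊆ {w | ⟪y - p, w - a⟫ = 0} := by
      apply convexHull_min
      · intro x hx
        rcases hx with rfl | rfl | rfl
        · simp
        · exact h1
        · exact h2
      · intro x hx z hz s t hs ht hst
        have hx' : ⟪y - p, x - a⟫ = 0 := hx
        have hz' : ⟪y - p, z - a⟫ = 0 := hz
        have hcomb : (s • x + t • z) - a = s • (x - a) + t • (z - a) := by
          have hs' : s = 1 - t := by linarith
          rw [hs']; module
        show ⟪y - p, (s • x + t • z) - a⟫ = 0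
        rw [hcomb, inner_add_right, real_inner_smul_right, real_inner_smul_right, hx', hz']
        ring
    have hwa : ⟪y - p, w - a⟫ = 0 := hS hw
    have hpa : ⟪y - p, p - a⟫ = 0 := hS hpmem
    have h3 : ⟪y - p, w - p⟫ = ⟪y - p, w - a⟫ - ⟪y - p, p - a⟫ := by
      rw [← inner_sub_right]; congr 1; abel
    rw [h3, hwa, hpa]; simp
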